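/- Let ν > 0 and let B be a q × q real symmetric matrix with eigenvalues b̃₁,…,b̃_q. Then for every q × q real positive semi-definite matrix D, (1/2)‖D − B‖_F² + ν tr(D) ≥ (1/2) Σ_{i=1}^q (g_ν(b̃_i) − b̃_i)² + ν Σ_{i=1}^q g_ν(b̃_i), where g_ν(x) = max(x − ν, 0); that is, the minimum value of (1/2)‖D − B‖_F² + ν tr(D) over positive semi-definite D equals (1/2) Σ_i (g_ν(b̃_i) − b̃_i)² + ν Σ_i g_ν(b̃_i). -/

import Mathlib

open Matrix

/-- The squared Frobenius norm of a real matrix. -/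
def frobSq {q : ℕ} (W : Matrix (Fin q) (Fin q) ℝ) : ℝ := ∑ i, ∑ j, (W i j) ^ 2

lemma frobSq_eq_trace {q : ℕ} (W : Matrix (Fin q) (Fin q) ℝ) :
    frobSq W = (W * Wᵀ).trace := by
  simp [frobSq, Matrix.trace, Matrix.mul_apply, Matrix.diag, sq]

lemma frobSq_conj {q : ℕ} {P : Matrix (Fin q) (Fin q) ℝ} (hP : P * Pᵀ = 1)
    (A : Matrix (Fin q) (Fin q) ℝ) : frobSq (P * A * Pᵀ) = frobSq A := by
  have hP' : Pᵀ * P = 1 := mul_eq_one_comm.mp hP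
  rw [frobSq_eq_trace, frobSq_eq_trace]
  have key : (P * A * Pᵀ) * (P * A * Pᵀ)ᵀ = P * (A * Aᵀ) * Pᵀ := by
    simp only [Matrix.transpose_mul, Matrix.transpose_transpose, Matrix.mul_assoc]
    rw [show Pᵀ * (P * (Aᵀ * Pᵀ)) = Aᵀ * Pᵀ by
      rw [← Matrix.mul_assoc, hP', Matrix.one_mul]]
  rw [key, Matrix.trace_mul_cycle, ← Matrix.mul_assoc, hP', Matrix.one_mul]

lemma trace_conj {q : ℕ} {P : Matrix (Fin q) (Fin q) ℝ} (hP : P * Pᵀ = 1)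
    (A : Matrix (Fin q) (Fin q) ℝ) : (P * A * Pᵀ).trace = A.trace := by
  have hP' : Pᵀ * P = 1 := mul_eq_one_comm.mp hP
  rw [Matrix.trace_mul_cycle, hP', Matrix.one_mul]

lemma scalar_ineq (ν c x : ℝ) (hν : 0 < ν) (hx : 0 ≤ x) :
    (1 / 2) * (max (c - ν) 0 - c) ^ 2 + ν * max (c - ν) 0 ≤
      (1 / 2) * (x - c) ^ 2 + ν * x := by
  rcases le_or_gt (c - ν) 0 with h | h
  · rw [max_eq_right h]; nlinarith
  · rw [max_eq_left h.le]; nlinarith [sq_nonneg (x - (c - ν))]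

lemma psd_diag_nonneg {q : ℕ} {E : Matrix (Fin q) (Fin q) ℝ} (hE : E.PosSemidef)
    (i : Fin q) : 0 ≤ E i i := by
  have := hE.dotProduct_mulVec_nonneg (Pi.single i 1)
  simpa [Matrix.mulVec_single, dotProduct, Pi.single_apply, Finset.sum_ite_eq] using this

lemma frobSq_diagonal {q : ℕ} (d : Fin q → ℝ) :
    frobSq (Matrix.diagonal d) = ∑ i, d i ^ 2 := by
  unfold frobSq
  refine Finset.sum_congr rfl fun i _ => ?_
  rw [Finset.sum_eq_single i]
  · simp
  · intro j _ hj; simp [Matrix.diagonal_apply_ne' _ hj]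
  · simp

/-- For `ν > 0` and a symmetric `B = P diag(b) Pᵀ` (`P` orthogonal, so `b` lists the
eigenvalues of `B`), every positive semi-definite `D` satisfies
`(1/2)‖D - B‖_F² + ν tr(D) ≥ (1/2) Σᵢ (g_ν(bᵢ) - bᵢ)² + ν Σᵢ g_ν(bᵢ)` with
`g_ν(x) = max (x - ν) 0`, and this lower bound is attained by some positive
semi-definite `D`; that is, it is the minimum value of the objective over
positive semi-definite matrices. -/
theorem prox_trace_norm_psd_min_value {q : ℕ} (ν : ℝ) (hν : 0 < ν)
    (B P : Matrix (Fin q) (Fin q) ℝ) (b : Fin q → ℝ)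
    (hBsymm : B.IsSymm) (hP : P * Pᵀ = 1)
    (hB : B = P * Matrix.diagonal b * Pᵀ) :
    (∀ D : Matrix (Fin q) (Fin q) ℝ, D.PosSemidef →
      (1 / 2) * (∑ i, (max (b i - ν) 0 - b i) ^ 2) + ν * (∑ i, max (b i - ν) 0) ≤
        (1 / 2) * frobSq (D - B) + ν * D.trace) ∧
    (∃ D : Matrix (Fin q) (Fin q) ℝ, D.PosSemidef ∧
      (1 / 2) * frobSq (D - B) + ν * D.trace =
        (1 / 2) * (∑ i, (max (b i - ν) 0 - b i) ^ 2) + ν * (∑ i, max (b i - ν) 0)) := by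
  have hP' : Pᵀ * P = 1 := mul_eq_one_comm.mp hP
  constructor
  · intro D hD
    set E := Pᵀ * D * P with hEdef
    have hE : E.PosSemidef := by
      have := hD.mul_mul_conjTranspose_same Pᵀ
      simpa [Matrix.conjTranspose_eq_transpose_of_trivial, Matrix.transpose_transpose]
        using this
    have hDeq : D = P * E * Pᵀ := by
      rw [hEdef]
      simp only [← Matrix.mul_assoc, hP, Matrix.one_mul]
      rw [Matrix.mul_assoc, hP, Matrix.mul_one]
    have hsub : D - B = P * (E - Matrix.diagonal b) * Pᵀ := by
      rw [hDeq, hB, Matrix.mul_sub, Matrix.sub_mul]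
    have hfrob : frobSq (D - B) = frobSq (E - Matrix.diagonal b) := by
      rw [hsub, frobSq_conj hP]
    have htr : D.trace = E.trace := by rw [hDeq, trace_conj hP]
    have h1 : ∑ i, (E i i - b i) ^ 2 ≤ frobSq (E - Matrix.diagonal b) := by
      unfold frobSq
      refine Finset.sum_le_sum fun i _ => ?_
      calc (E i i - b i) ^ 2 = ((E - Matrix.diagonal b) i i) ^ 2 := by
            simp [Matrix.sub_apply, Matrix.diagonal_apply_eq]
        _ ≤ ∑ j, ((E - Matrix.diagonal b) i j) ^ 2 :=
            Finset.single_le_sum (f := fun j => ((E - Matrix.diagonal b) i j) ^ 2)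
              (fun j _ => sq_nonneg _) (Finset.mem_univ i)
    have h2 : ∑ i, ((1 / 2) * (max (b i - ν) 0 - b i) ^ 2 + ν * max (b i - ν) 0) ≤
        ∑ i, ((1 / 2) * (E i i - b i) ^ 2 + ν * E i i) :=
      Finset.sum_le_sum fun i _ => scalar_ineq ν (b i) (E i i) hν (psd_diag_nonneg hE i)
    have htrE : E.trace = ∑ i, E i i := rfl
    rw [hfrob, htr, htrE]
    rw [Finset.sum_add_distrib, ← Finset.mul_sum, ← Finset.mul_sum] at h2
    rw [Finset.sum_add_distrib, ← Finset.mul_sum, ← Finset.mul_sum] at h2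
    nlinarith [h1]
  · refine ⟨P * Matrix.diagonal (fun i => max (b i - ν) 0) * Pᵀ, ?_, ?_⟩
    · have hd : (Matrix.diagonal (fun i => max (b i - ν) 0)).PosSemidef :=
        Matrix.posSemidef_diagonal_iff.mpr fun i => le_max_right _ _
      have := hd.mul_mul_conjTranspose_same P
      simpa [Matrix.conjTranspose_eq_transpose_of_trivial] using this
    · have hsub : P * Matrix.diagonal (fun i => max (b i - ν) 0) * Pᵀ - B =
          P * (Matrix.diagonal (fun i => max (b i - ν) 0 - b i)) * Pᵀ := by
        rw [hB, ← Matrix.sub_mul, ← Matrix.mul_sub, Matrix.diagonal_sub]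
      rw [hsub, frobSq_conj hP, trace_conj hP, frobSq_diagonal, Matrix.trace_diagonal]
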